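/- Lower bound of the augmented Lagrangian: if ℓ has L-Lipschitz gradient, ρ ≥ L, and λᵢ = −Bᵢᵀ∇ℓ(x̄) for all i, then L_ρ(x, x̄, λ) := ∑ᵢ g(xᵢ) + ℓ(x̄) + ∑ᵢ λᵢᵀ(x̄ᵢ − xᵢ) + (ρ/2)∑ᵢ‖x̄ᵢ − xᵢ‖² ≥ ∑ᵢ g(xᵢ) + ℓ(∑ᵢ Bᵢxᵢ) + ((ρ−L)/2)∑ᵢ‖x̄ᵢ − xᵢ‖². -/

import Mathlib

open RealInnerProductSpace Filter

/-- Block embedding of `ℝ^H` into the `i`-th coordinate block of `ℝ^(N·H)`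
(positions `i*H` to `(i+1)*H - 1`), zeros elsewhere. -/
noncomputable def Bemb {N H : ℕ} (i : Fin N) (x : EuclideanSpace ℝ (Fin H)) :
    EuclideanSpace ℝ (Fin (N * H)) :=
  WithLp.toLp 2 fun k =>
    if h : (i : ℕ) * H ≤ (k : ℕ) ∧ (k : ℕ) < ((i : ℕ) + 1) * H then
      x ⟨(k : ℕ) - (i : ℕ) * H, by
        obtain ⟨h1, h2⟩ := h
        rw [Nat.succ_mul] at h2
        omega⟩
    else 0

/-- `Bᵢᵀ` : extraction of the `i`-th coordinate block of `ℝ^(N·H)`. -/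
noncomputable def BembT {N H : ℕ} (i : Fin N) (z : EuclideanSpace ℝ (Fin (N * H))) :
    EuclideanSpace ℝ (Fin H) :=
  WithLp.toLp 2 fun t => z ⟨(i : ℕ) * H + (t : ℕ), by
    have h1 : (i : ℕ) + 1 ≤ N := i.isLt
    calc (i : ℕ) * H + (t : ℕ) < (i : ℕ) * H + H := by omega
    _ = ((i : ℕ) + 1) * H := (Nat.succ_mul _ _).symm
    _ ≤ N * H := Nat.mul_le_mul_right _ h1⟩

/-- Descent lemma: a differentiable function with `L`-Lipschitz gradient satisfies
`f y ≤ f x + ⟪∇f x, y - x⟫ + L/2 ‖y - x‖²`. -/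
lemma descent_lemma {E : Type*} [NormedAddCommGroup E] [InnerProductSpace ℝ E] [CompleteSpace E]
    (f : E → ℝ) (hf : Differentiable ℝ f) {L : ℝ}
    (hLip : ∀ a b, ‖gradient f a - gradient f b‖ ≤ L * ‖a - b‖) (x y : E) :
    f y ≤ f x + ⟪gradient f x, y - x⟫ + L / 2 * ‖y - x‖ ^ 2 := by
  set v := y - x with hv
  have hgcont : Continuous (gradient f) := by
    have : LipschitzWith (Real.toNNReal (max L 0)) (gradient f) := by
      apply LipschitzWith.of_dist_le_mul
      intro a b
      rw [dist_eq_norm]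
      calc ‖gradient f a - gradient f b‖ ≤ L * ‖a - b‖ := hLip a b
        _ ≤ max L 0 * ‖a - b‖ := by
            apply mul_le_mul_of_nonneg_right (le_max_left _ _) (norm_nonneg _)
        _ = Real.toNNReal (max L 0) * dist a b := by
            rw [dist_eq_norm, Real.coe_toNNReal _ (le_max_right _ _)]
    exact this.continuous
  have hderiv : ∀ t : ℝ, HasDerivAt (fun s : ℝ => f (x + s • v))
      ⟪gradient f (x + t • v), v⟫ t := by
    intro t
    have h1 : HasDerivAt (fun s : ℝ => x + s • v) v t := by
      simpa using ((hasDerivAt_id t).smul_const v).const_add x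
    have h2 := ((hf (x + t • v)).hasGradientAt).hasFDerivAt
    have := h2.comp_hasDerivAt t h1
    simpa [InnerProductSpace.toDual_apply_apply, Function.comp_def] using this
  have hcont : Continuous fun t : ℝ => ⟪gradient f (x + t • v), v⟫ := by
    exact (Continuous.inner (hgcont.comp (by continuity)) continuous_const)
  have key : f y - f x = ∫ t in (0:ℝ)..1, ⟪gradient f (x + t • v), v⟫ := by
    rw [intervalIntegral.integral_eq_sub_of_hasDerivAt
      (fun t _ => hderiv t) (hcont.intervalIntegrable 0 1)]
    simp [hv]
  have bound : ∫ t in (0:ℝ)..1, ⟪gradient f (x + t • v), v⟫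
      ≤ ∫ t in (0:ℝ)..1, (⟪gradient f x, v⟫ + L * t * ‖v‖ ^ 2) := by
    apply intervalIntegral.integral_mono_on zero_le_one
      (hcont.intervalIntegrable 0 1)
      (by apply Continuous.intervalIntegrable; continuity)
    intro t ht
    have h1 : ⟪gradient f (x + t • v), v⟫ - ⟪gradient f x, v⟫
        = ⟪gradient f (x + t • v) - gradient f x, v⟫ := by
      rw [inner_sub_left]
    have h2 : ⟪gradient f (x + t • v) - gradient f x, v⟫
        ≤ ‖gradient f (x + t • v) - gradient f x‖ * ‖v‖ :=
      real_inner_le_norm _ _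
    have h3 : ‖gradient f (x + t • v) - gradient f x‖ ≤ L * (t * ‖v‖) := by
      have := hLip (x + t • v) x
      simpa [norm_smul, abs_of_nonneg ht.1] using this
    nlinarith [norm_nonneg v]
  have intval : ∫ t in (0:ℝ)..1, (⟪gradient f x, v⟫ + L * t * ‖v‖ ^ 2)
      = ⟪gradient f x, v⟫ + L / 2 * ‖v‖ ^ 2 := by
    rw [intervalIntegral.integral_add (by apply Continuous.intervalIntegrable; continuity)
      (by apply Continuous.intervalIntegrable; continuity)]
    simp only [mul_assoc]
    rw [intervalIntegral.integral_const, intervalIntegral.integral_const_mul]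
    have : ∫ t in (0:ℝ)..1, t * ‖v‖ ^ 2 = ‖v‖^2 / 2 := by
      rw [intervalIntegral.integral_mul_const, integral_id]
      ring
    rw [this, sub_zero, one_smul]; ring
  linarith [key, bound, intval.le, intval.ge]

/-- Index of the `t`-th coordinate of block `i`. -/
noncomputable def embIdx {N H : ℕ} (i : Fin N) (t : Fin H) : Fin (N * H) :=
  ⟨(i : ℕ) * H + (t : ℕ), by
    have h1 : (i : ℕ) + 1 ≤ N := i.isLt
    calc (i : ℕ) * H + (t : ℕ) < (i : ℕ) * H + H := by omega
    _ = ((i : ℕ) + 1) * H := (Nat.succ_mul _ _).symm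
    _ ≤ N * H := Nat.mul_le_mul_right _ h1⟩

lemma Bemb_embIdx {N H : ℕ} (i : Fin N) (w : EuclideanSpace ℝ (Fin H)) (t : Fin H) :
    Bemb i w (embIdx i t) = w t := by
  have hcond : (i : ℕ) * H ≤ (i : ℕ) * H + (t : ℕ) ∧
      (i : ℕ) * H + (t : ℕ) < ((i : ℕ) + 1) * H := ⟨by omega, by rw [Nat.succ_mul]; omega⟩
  simp only [Bemb, embIdx, hcond, dif_pos]
  exact congrArg w (Fin.ext (by simp))

/-- `BembT i` is the adjoint of `Bemb i`. -/
lemma Bemb_adjoint {N H : ℕ} (i : Fin N) (z : EuclideanSpace ℝ (Fin (N * H)))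
    (w : EuclideanSpace ℝ (Fin H)) : ⟪z, Bemb i w⟫ = ⟪BembT i z, w⟫ := by
  simp only [PiLp.inner_apply, RCLike.inner_apply, conj_trivial,
    show ∀ k, (Bemb i w) k * z k = z k * (Bemb i w) k from fun k => mul_comm _ _,
    show ∀ t, w t * (BembT i z) t = (BembT i z) t * w t from fun t => mul_comm _ _]
  have hinj : ∀ a : Fin H, a ∈ Finset.univ → ∀ b : Fin H, b ∈ Finset.univ →
      embIdx i a = embIdx i b → a = b := by
    intro a _ b _ hab
    simp only [embIdx, Fin.mk.injEq] at hab
    exact Fin.ext (by omega)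
  calc ∑ k : Fin (N * H), z k * Bemb i w k
      = ∑ k ∈ Finset.image (embIdx i) Finset.univ, z k * Bemb i w k := by
        symm
        apply Finset.sum_subset (Finset.subset_univ _)
        intro k _ hk
        have : ¬((i : ℕ) * H ≤ (k : ℕ) ∧ (k : ℕ) < ((i : ℕ) + 1) * H) := by
          intro ⟨h1, h2⟩
          apply hk
          simp only [Finset.mem_image, Finset.mem_univ, true_and]
          refine ⟨⟨(k : ℕ) - (i : ℕ) * H, by rw [Nat.succ_mul] at h2; omega⟩, ?_⟩
          exact Fin.ext (by simp [embIdx]; omega)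
        simp [Bemb, this]
    _ = ∑ t : Fin H, z (embIdx i t) * Bemb i w (embIdx i t) := Finset.sum_image hinj
    _ = ∑ t : Fin H, BembT i z t * w t := by
        apply Finset.sum_congr rfl
        intro t _
        rw [Bemb_embIdx]
        rfl

lemma Bemb_sub {N H : ℕ} (i : Fin N) (a b : EuclideanSpace ℝ (Fin H)) :
    Bemb i (a - b) = Bemb i a - Bemb i b := by
  ext k
  simp only [Bemb, PiLp.sub_apply]
  split <;> simp

lemma BembT_sum {N H : ℕ} (i : Fin N) (z : Fin N → EuclideanSpace ℝ (Fin (N * H))) :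
    BembT i (∑ j, z j) = ∑ j, BembT i (z j) := by
  ext t
  simp only [BembT]
  simp [WithLp.ofLp_sum]

lemma BembT_Bemb {N H : ℕ} (i j : Fin N) (v : EuclideanSpace ℝ (Fin H)) :
    BembT i (Bemb j v) = if i = j then v else 0 := by
  ext t
  simp only [BembT, Bemb]
  by_cases hij : i = j
  · subst hij
    have hcond : (i : ℕ) * H ≤ (i : ℕ) * H + (t : ℕ) ∧
        (i : ℕ) * H + (t : ℕ) < ((i : ℕ) + 1) * H := ⟨by omega, by rw [Nat.succ_mul]; omega⟩
    simp only [hcond, dif_pos, if_pos rfl]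
    exact congrArg v (Fin.ext (by simp))
  · have hne : (i : ℕ) ≠ (j : ℕ) := fun h => hij (Fin.ext h)
    have hcond : ¬((j : ℕ) * H ≤ (i : ℕ) * H + (t : ℕ) ∧
        (i : ℕ) * H + (t : ℕ) < ((j : ℕ) + 1) * H) := by
      intro ⟨h1, h2⟩
      rcases lt_or_gt_of_ne hne with h | h
      · have : ((i : ℕ) + 1) * H ≤ (j : ℕ) * H := Nat.mul_le_mul_right _ h
        rw [Nat.succ_mul] at this
        omega
      · have : ((j : ℕ) + 1) * H ≤ (i : ℕ) * H := Nat.mul_le_mul_right _ h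
        omega
    simp [hcond, hij]

theorem augmented_lagrangian_lower_bound (N H : ℕ) (hN : 0 < N) (hH : 0 < H) (L ρ : ℝ)
    (hρL : L ≤ ρ)
    (g : EuclideanSpace ℝ (Fin H) → ℝ)
    (ℓ : EuclideanSpace ℝ (Fin (N * H)) → ℝ) (hℓ : Differentiable ℝ ℓ)
    (hLip : ∀ a b, ‖gradient ℓ a - gradient ℓ b‖ ≤ L * ‖a - b‖)
    (x xb : Fin N → EuclideanSpace ℝ (Fin H))
    (lam : Fin N → EuclideanSpace ℝ (Fin H))
    (hlam : ∀ i, lam i = -(BembT i (gradient ℓ (∑ j : Fin N, Bemb j (xb j))))) :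
    (∑ i : Fin N, g (x i)) + ℓ (∑ j : Fin N, Bemb j (xb j)) +
        (∑ i : Fin N, ⟪lam i, xb i - x i⟫) + ρ / 2 * ∑ i : Fin N, ‖xb i - x i‖ ^ 2 ≥
      (∑ i : Fin N, g (x i)) + ℓ (∑ j : Fin N, Bemb j (x j)) +
        (ρ - L) / 2 * ∑ i : Fin N, ‖xb i - x i‖ ^ 2 := by
  set zb := ∑ j : Fin N, Bemb j (xb j) with hzb
  set z := ∑ j : Fin N, Bemb j (x j) with hz
  set G := gradient ℓ zb with hG
  -- z - zb as a sum of block embeddings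
  have hdiff : z - zb = ∑ i : Fin N, Bemb i (x i - xb i) := by
    rw [hz, hzb, ← Finset.sum_sub_distrib]
    exact Finset.sum_congr rfl fun i _ => (Bemb_sub i (x i) (xb i)).symm
  -- the inner product term
  have hinner : (∑ i : Fin N, ⟪lam i, xb i - x i⟫) = ⟪G, z - zb⟫ := by
    have h1 : ∀ i : Fin N, ⟪lam i, xb i - x i⟫ = ⟪G, Bemb i (x i - xb i)⟫ := by
      intro i
      rw [hlam i, inner_neg_left, Bemb_adjoint, show x i - xb i = -(xb i - x i) by abel,
        inner_neg_right]
    rw [Finset.sum_congr rfl fun i _ => h1 i, ← inner_sum, ← hdiff]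
  -- the norm identity
  have hBT : ∀ i : Fin N, BembT i (z - zb) = x i - xb i := by
    intro i
    rw [hdiff, BembT_sum]
    have : ∀ j : Fin N, BembT i (Bemb j (x j - xb j))
        = if i = j then x j - xb j else 0 := fun j => BembT_Bemb i j _
    rw [Finset.sum_congr rfl fun j _ => this j]
    simp
  have hnorm : ‖z - zb‖ ^ 2 = ∑ i : Fin N, ‖xb i - x i‖ ^ 2 := by
    have h1 : (‖z - zb‖ : ℝ) ^ 2 = ⟪z - zb, z - zb⟫ := (real_inner_self_eq_norm_sq _).symm
    rw [h1]
    nth_rewrite 2 [hdiff]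
    rw [inner_sum]
    apply Finset.sum_congr rfl
    intro i _
    rw [Bemb_adjoint, hBT i, real_inner_self_eq_norm_sq, ← norm_neg]
    congr 1
    abel
  -- descent lemma
  have hdesc := descent_lemma ℓ hℓ hLip zb z
  rw [← hG, hnorm] at hdesc
  have hS : (0:ℝ) ≤ ∑ i : Fin N, ‖xb i - x i‖ ^ 2 :=
    Finset.sum_nonneg fun i _ => sq_nonneg _
  rw [ge_iff_le, hinner]
  linarith
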